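/- Let φ be the involution on enhanced states mapping a state S of a diagram D to the state φ(S) of the mirror diagram D̄ obtained by reversing all crossing markers and all circle labels. Then φ intertwines the transpose differential d̃ on C(D) with the differential d^+ on C(D̄): φ ∘ d̃ = d^+ ∘ φ. Consequently H^{i,j,s}(D) ≅ H_{-i,-j,-s}(D̄). -/

import Mathlib

noncomputable def quotCongrOfMap {M N : Type*} [AddCommGroup M] [AddCommGroup N]
    (F : M ≃+ N) (Z B : AddSubgroup M) (Z' B' : AddSubgroup N)
    (hZ : Z.map F.toAddMonoidHom = Z') (hB : B.map F.toAddMonoidHom = B') :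
    (Z ⧸ B.addSubgroupOf Z) ≃+ (Z' ⧸ B'.addSubgroupOf Z') := by
  subst hZ
  refine QuotientAddGroup.congr _ _ (F.addSubgroupMap Z) ?_
  ext ⟨y, hy⟩
  rw [AddSubgroup.mem_addSubgroupOf, ← hB]
  constructor
  · rintro ⟨⟨x, hxZ⟩, hx, hxy⟩
    have hxy' : F x = y := congrArg Subtype.val hxy
    exact ⟨x, AddSubgroup.mem_addSubgroupOf.mp hx, hxy'⟩
  · rintro ⟨x, hxB, rfl⟩
    have hxZ : x ∈ Z := by
      obtain ⟨z, hz, hzx⟩ := hy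
      rwa [← F.injective hzx]
    exact ⟨⟨x, hxZ⟩, AddSubgroup.mem_addSubgroupOf.mpr hxB, Subtype.ext rfl⟩




/-- The subgroup of the free abelian group on enhanced states spanned by
states of a fixed tri-grading `(i, j, σ)`. -/
noncomputable def gradedPart {S A : Type*} (gI gJ : S → ℤ) (gS : S → A)
    (i j : ℤ) (σ : A) : AddSubgroup (S →₀ ℤ) where
  carrier := {x | ∀ s ∈ x.support, gI s = i ∧ gJ s = j ∧ gS s = σ}
  zero_mem' := by simp
  add_mem' := by
    intro a b ha hb s hs
    classical
    rcases Finset.mem_union.mp (Finsupp.support_add hs) with h | h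
    · exact ha s h
    · exact hb s h
  neg_mem' := by
    intro a ha s hs
    exact ha s (by simpa using hs)

/-- Homology: cycles `Z` modulo boundaries `B`. -/
abbrev khHomology {S : Type*} (Z B : AddSubgroup (S →₀ ℤ)) : Type _ :=
  Z ⧸ B.addSubgroupOf Z

/-- The involution `φ` sending a state of `D` to the state of the
mirror diagram `D̄` with all markers and circle labels reversed intertwines the
transpose differential `d̃` on `C(D)` with `d⁺` on `C(D̄)`: `φ ∘ d̃ = d⁺ ∘ φ`.
Consequently `H^{i,j,s}(D) ≅ H_{-i,-j,-s}(D̄)`, where the cohomology of `D` is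
computed as the homology of `(C(D), d̃)` (with `d̃` raising `i` by 2) and the
homology of `D̄` is computed from `d⁺` (lowering `i` by 2). -/
theorem stmt_4
    {S Sb V A : Type*} [Fintype S] [Fintype Sb] [Fintype V] [AddCommGroup A]
    (e : S ≃ Sb)
    (inc : S → S → V → ℤ) (incb : Sb → Sb → V → ℤ)
    (t : S → V → ℕ) (tplusb : Sb → V → ℕ)
    -- incidence numbers satisfy [S:T]_v = [φ(T):φ(S)]_{v̄}
    (hinc : ∀ s s' v, inc s s' v = incb (e s') (e s) v)
    -- t(S,v) = t⁺(φ(S), v̄)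
    (hts : ∀ s v, t s v = tplusb (e s) v)
    -- gradings I, J, s, negated by φ
    (gI gJ : S → ℤ) (gS : S → A) (gIb gJb : Sb → ℤ) (gSb : Sb → A)
    (hgI : ∀ s, gIb (e s) = - gI s) (hgJ : ∀ s, gJb (e s) = - gJ s)
    (hgS : ∀ s, gSb (e s) = - gS s)
    (dtilde : (S →₀ ℤ) →+ (S →₀ ℤ)) (dplus : (Sb →₀ ℤ) →+ (Sb →₀ ℤ))
    (hdt : ∀ s : S, dtilde (Finsupp.single s 1) =
        ∑ s' : S, ∑ v : V, (((-1 : ℤ) ^ t s v) * inc s' s v) • Finsupp.single s' 1)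
    (hdp : ∀ s : Sb, dplus (Finsupp.single s 1) =
        ∑ s' : Sb, ∑ v : V, (((-1 : ℤ) ^ tplusb s v) * incb s s' v) • Finsupp.single s' 1)
    (Φ : (S →₀ ℤ) →+ (Sb →₀ ℤ))
    (hΦ : ∀ s : S, Φ (Finsupp.single s 1) = Finsupp.single (e s) 1) :
    Φ.comp dtilde = dplus.comp Φ
      ∧ ∀ (i j : ℤ) (σ : A), Nonempty
        (khHomology (gradedPart gI gJ gS i j σ ⊓ dtilde.ker)
            (AddSubgroup.map dtilde (gradedPart gI gJ gS (i - 2) j σ)) ≃+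
         khHomology (gradedPart gIb gJb gSb (-i) (-j) (-σ) ⊓ dplus.ker)
            (AddSubgroup.map dplus (gradedPart gIb gJb gSb (-i + 2) (-j) (-σ)))) := by
  classical
  -- Part 1: intertwining
  have key : ∀ s : S, Φ (dtilde (Finsupp.single s 1)) = dplus (Φ (Finsupp.single s 1)) := by
    intro s
    rw [hΦ s, hdp, hdt, map_sum,
      ← Equiv.sum_comp e (fun sb' => ∑ v : V,
        (((-1 : ℤ) ^ tplusb (e s) v) * incb (e s) sb' v) • Finsupp.single sb' 1)]
    refine Finset.sum_congr rfl fun s' _ => ?_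
    rw [map_sum]
    refine Finset.sum_congr rfl fun v _ => ?_
    rw [map_zsmul, hΦ, hinc s' s v, hts s v]
  have part1 : Φ.comp dtilde = dplus.comp Φ := by
    apply Finsupp.addHom_ext
    intro s n
    have hn : (Finsupp.single s n : S →₀ ℤ) = n • Finsupp.single s 1 := by
      simp [Finsupp.smul_single]
    simp only [AddMonoidHom.comp_apply, hn, map_zsmul, key s]
  refine ⟨part1, fun i j σ => ?_⟩
  -- Identify Φ with the domCongr equivalence
  set E : (S →₀ ℤ) ≃+ (Sb →₀ ℤ) := Finsupp.domCongr e with hE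
  have hΦE : Φ = E.toAddMonoidHom := by
    apply Finsupp.addHom_ext
    intro s n
    have hn : (Finsupp.single s n : S →₀ ℤ) = n • Finsupp.single s 1 := by
      simp [Finsupp.smul_single]
    rw [hn, map_zsmul, map_zsmul, hΦ]
    simp [hE, Finsupp.domCongr_apply, Finsupp.smul_single]
  -- mapping of graded parts
  have hgrad : ∀ (i' j' : ℤ) (σ' : A),
      (gradedPart gI gJ gS i' j' σ').map E.toAddMonoidHom
        = gradedPart gIb gJb gSb (-i') (-j') (-σ') := by
    intro i' j' σ'
    ext y
    rw [AddSubgroup.mem_map_equiv]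
    constructor
    · intro h sb hsb
      have hmem : e.symm sb ∈ (E.symm y).support := by
        simp only [hE, Finsupp.domCongr_symm, Finsupp.domCongr_apply,
          Finsupp.mem_support_iff, Finsupp.equivMapDomain_apply, Equiv.symm_symm] at *
        simpa using hsb
      obtain ⟨h1, h2, h3⟩ := h _ hmem
      refine ⟨?_, ?_, ?_⟩
      · rw [← e.apply_symm_apply sb, hgI, h1]
      · rw [← e.apply_symm_apply sb, hgJ, h2]
      · rw [← e.apply_symm_apply sb, hgS, h3]
    · intro h s hs
      have hmem : e s ∈ y.support := by
        simp only [hE, Finsupp.domCongr_symm, Finsupp.domCongr_apply,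
          Finsupp.mem_support_iff, Finsupp.equivMapDomain_apply, Equiv.symm_symm] at hs
        simpa using hs
      obtain ⟨h1, h2, h3⟩ := h _ hmem
      rw [hgI] at h1; rw [hgJ] at h2; rw [hgS] at h3
      exact ⟨by omega, by omega, by
        have := neg_injective h3; exact this⟩
  have hker : (dtilde.ker).map E.toAddMonoidHom = dplus.ker := by
    ext y
    rw [AddSubgroup.mem_map_equiv, AddMonoidHom.mem_ker, AddMonoidHom.mem_ker]
    have hcomm : Φ (dtilde (E.symm y)) = dplus y := by
      have := congrArg (fun f => f (E.symm y)) part1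
      simpa [hΦE] using this
    constructor
    · intro h
      rw [← hcomm, h]
      simp
    · intro h
      have : Φ (dtilde (E.symm y)) = 0 := by rw [hcomm, h]
      rw [hΦE] at this
      exact E.injective (by simpa using this)
  -- inf and image subgroups
  have hZ : (gradedPart gI gJ gS i j σ ⊓ dtilde.ker).map E.toAddMonoidHom
      = gradedPart gIb gJb gSb (-i) (-j) (-σ) ⊓ dplus.ker := by
    ext y
    rw [AddSubgroup.mem_map_equiv, AddSubgroup.mem_inf, AddSubgroup.mem_inf,
      ← hgrad i j σ, ← hker, AddSubgroup.mem_map_equiv, AddSubgroup.mem_map_equiv]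
  have hB : (AddSubgroup.map dtilde (gradedPart gI gJ gS (i - 2) j σ)).map E.toAddMonoidHom
      = AddSubgroup.map dplus (gradedPart gIb gJb gSb (-i + 2) (-j) (-σ)) := by
    rw [AddSubgroup.map_map, ← hΦE, part1, hΦE, ← AddSubgroup.map_map, hgrad,
      show (-(i - 2) : ℤ) = -i + 2 from by ring]
  exact ⟨quotCongrOfMap E _ _ _ _ hZ hB⟩
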